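/- Let κ be a strongly inaccessible cardinal. Then every κ-tree has a branch if and only if every binary κ-tree has a branch. -/

import Mathlib

open Cardinal

/-- The restriction of the tree order to the predecessors of `t`. -/
def segRel {T : Type u} (lt : T → T → Prop) (t : T) :
    {y : T // lt y t} → {y : T // lt y t} → Prop :=
  fun a b => lt a.1 b.1

/-- A tree is a type with a transitive binary relation such that the
set of predecessors of any element is well-ordered by the relation. -/
structure IsTreeOrder {T : Type u} (lt : T → T → Prop) : Prop where
  trans : Transitive lt
  wo : ∀ t : T, IsWellOrder {y : T // lt y t} (segRel lt t)

/-- The rank of an element of a tree: the order type of its set of predecessors. -/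
noncomputable def treeRank {T : Type u} {lt : T → T → Prop} (h : IsTreeOrder lt) (t : T) :
    Ordinal.{u} :=
  @Ordinal.type _ (segRel lt t) (h.wo t)

/-- A `κ`-tree: every element has rank `< κ`, and each level below `κ` is
nonempty of cardinality `< κ`. -/
def IsKappaTree {T : Type 1} {lt : T → T → Prop} (h : IsTreeOrder lt) (κ : Cardinal.{0}) :
    Prop :=
  (∀ t, treeRank h t < Ordinal.lift.{1} κ.ord) ∧
  ∀ α < Ordinal.lift.{1} κ.ord,
    ({t | treeRank h t = α}.Nonempty ∧ #{t | treeRank h t = α} < Cardinal.lift.{1} κ)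

/-- A branch of a `κ`-tree: a downward closed set meeting each level `T_α`
(`α < κ`) in exactly one element. -/
def IsTreeBranch {T : Type 1} {lt : T → T → Prop} (h : IsTreeOrder lt) (κ : Cardinal.{0})
    (b : Set T) : Prop :=
  (∀ x ∈ b, ∀ y, lt y x → y ∈ b) ∧
  ∀ α < Ordinal.lift.{1} κ.ord, ∃! t, t ∈ b ∧ treeRank h t = α

/-- `κ` is strongly inaccessible: uncountable, regular, and a strong limit. -/
def IsStronglyInaccessible (κ : Cardinal.{0}) : Prop :=
  ℵ₀ < κ ∧ κ.IsRegular ∧ κ.IsStrongLimit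

/-- The canonical restriction of a (coded) binary sequence to domain `β`. -/
noncomputable def restrictFn (f : Ordinal → Bool) (β : Ordinal) : Ordinal → Bool :=
  fun γ => if γ < β then f γ else false

/-- A binary `κ`-tree. -/
def IsBinaryKappaTree (κ : Cardinal.{0}) (S : Set (Ordinal × (Ordinal → Bool))) : Prop :=
  (∀ p ∈ S, p.1 < κ.ord ∧ ∀ γ, p.1 ≤ γ → p.2 γ = false) ∧
  (∀ p ∈ S, ∀ β < p.1, (β, restrictFn p.2 β) ∈ S) ∧
  (∀ α < κ.ord, ∃ p ∈ S, p.1 = α)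

/-- A branch of a binary `κ`-tree. -/
def IsBinaryBranch (κ : Cardinal.{0}) (S : Set (Ordinal × (Ordinal → Bool)))
    (F : Ordinal → Bool) : Prop :=
  ∀ α < κ.ord, (α, restrictFn F α) ∈ S

attribute [local instance] Classical.propDecidable

/-! ### auxiliary lemmas -/

theorem restrictFn_lt {f : Ordinal → Bool} {β γ : Ordinal} (h : γ < β) :
    restrictFn f β γ = f γ := if_pos h

theorem restrictFn_le {f : Ordinal → Bool} {β γ : Ordinal} (h : β ≤ γ) :
    restrictFn f β γ = false := if_neg (not_lt.2 h)

theorem restrictFn_restrictFn (f : Ordinal → Bool) {β γ : Ordinal} (h : γ ≤ β) :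
    restrictFn (restrictFn f β) γ = restrictFn f γ := by
  funext ξ
  unfold restrictFn
  by_cases h1 : ξ < γ
  · rw [if_pos h1, if_pos h1, if_pos (h1.trans_le h)]
  · rw [if_neg h1, if_neg h1]

/-- the tree order on a binary tree -/
def binLt (S : Set (Ordinal × (Ordinal → Bool))) :
    ↥S → ↥S → Prop :=
  fun a b => a.1.1 < b.1.1 ∧ a.1.2 = restrictFn b.1.2 a.1.1

theorem binLt_trans (S : Set (Ordinal × (Ordinal → Bool))) : Transitive (binLt S) := by
  rintro a b c ⟨h1, h2⟩ ⟨h3, h4⟩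
  refine ⟨h1.trans h3, ?_⟩
  rw [h2, h4, restrictFn_restrictFn _ h1.le]

/-- the RelIso between the predecessors of `p` and `Iio p.1.1`. -/
noncomputable def binSegIso (S : Set (Ordinal × (Ordinal → Bool)))
    (hS : IsBinaryKappaTree κ S) (p : ↥S) :
    segRel (binLt S) p ≃r Subrel ((· < ·) : Ordinal → Ordinal → Prop) (· < p.1.1) where
  toFun q := ⟨q.1.1.1, q.2.1⟩
  invFun β := ⟨⟨(β.1, restrictFn p.1.2 β.1), hS.2.1 p.1 p.2 β.1 β.2⟩, β.2, rfl⟩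
  left_inv := by
    rintro ⟨⟨⟨β, f⟩, hmem⟩, hβ, hf⟩
    refine Subtype.ext (Subtype.ext ?_)
    show (β, restrictFn p.1.2 β) = (β, f)
    exact congrArg (Prod.mk β) hf.symm
  right_inv := by rintro ⟨β, hβ⟩; rfl
  map_rel_iff' := by
    rintro ⟨⟨⟨β, f⟩, hm⟩, hβ, hf⟩ ⟨⟨⟨β', f'⟩, hm'⟩, hβ', hf'⟩
    simp only at hf hf'
    constructor
    · intro hlt
      have hlt' : β < β' := hlt
      exact ⟨hlt', by show f = restrictFn f' β; rw [hf, hf', restrictFn_restrictFn _ hlt'.le]⟩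
    · rintro ⟨h1, _⟩; exact h1

theorem binLt_isTreeOrder (S : Set (Ordinal × (Ordinal → Bool)))
    (hS : IsBinaryKappaTree κ S) : IsTreeOrder (binLt S) := by
  refine ⟨binLt_trans S, fun p => ?_⟩
  exact (binSegIso S hS p).toRelEmbedding.isWellOrder

theorem binLt_treeRank (S : Set (Ordinal × (Ordinal → Bool)))
    (hS : IsBinaryKappaTree κ S) (p : ↥S) :
    treeRank (binLt_isTreeOrder S hS) p = Ordinal.lift.{1} p.1.1 := by
  unfold treeRank
  rw [@RelIso.ordinal_type_eq _ _ _ _ ((binLt_isTreeOrder S hS).wo p) _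
    (binSegIso S hS p)]
  rw [Ordinal.type_subrel ((· < ·) : Ordinal → Ordinal → Prop) p.1.1]
  exact Ordinal.typein_ordinal p.1.1

theorem binLt_isKappaTree {κ : Cardinal.{0}} (hκ : IsStronglyInaccessible κ)
    (S : Set (Ordinal × (Ordinal → Bool))) (hS : IsBinaryKappaTree κ S) :
    IsKappaTree (binLt_isTreeOrder S hS) κ := by
  constructor
  · intro p
    rw [binLt_treeRank S hS p, Ordinal.lift_lt]
    exact (hS.1 p.1 p.2).1
  · intro α hα
    obtain ⟨α₀, hα₀, rfl⟩ := Ordinal.lt_lift_iff.1 hα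
    constructor
    · obtain ⟨p, hp, hp1⟩ := hS.2.2 α₀ hα₀
      exact ⟨⟨p, hp⟩, by rw [Set.mem_setOf_eq, binLt_treeRank S hS, hp1]⟩
    · have hinj : Function.Injective
          (fun t : {t : ↥S | treeRank (binLt_isTreeOrder S hS) t = Ordinal.lift.{1} α₀} =>
            ((fun ξ : Set.Iio α₀ => t.1.1.2 ξ.1) : Set.Iio α₀ → Bool)) := by
        intro t t' het
        have h1 : t.1.1.1 = α₀ := by
          have := t.2; rw [Set.mem_setOf_eq, binLt_treeRank S hS] at this
          exact Ordinal.lift_inj.1 this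
        have h1' : t'.1.1.1 = α₀ := by
          have := t'.2; rw [Set.mem_setOf_eq, binLt_treeRank S hS] at this
          exact Ordinal.lift_inj.1 this
        refine Subtype.ext (Subtype.ext (Prod.ext ?_ ?_))
        · rw [h1, h1']
        · funext γ
          by_cases hγ : γ < α₀
          · exact congrFun het ⟨γ, hγ⟩
          · rw [(hS.1 t.1.1 t.1.2).2 γ (h1.symm ▸ not_lt.1 hγ),
              (hS.1 t'.1.1 t'.1.2).2 γ (h1'.symm ▸ not_lt.1 hγ)]
      have hle := Cardinal.mk_le_of_injective hinj
      have harr : #(Set.Iio α₀ → Bool) = Cardinal.lift.{1} (2 ^ α₀.card) := by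
        simp [Cardinal.mk_arrow, Ordinal.mk_Iio_ordinal, Cardinal.lift_power,
          Cardinal.lift_id']
      refine hle.trans_lt ?_
      rw [harr, Cardinal.lift_lt]
      exact hκ.2.2.two_power_lt (Cardinal.lt_ord.1 hα₀)

theorem forward_dir {κ : Cardinal.{0}} (hκ : IsStronglyInaccessible κ)
    (H : ∀ (T : Type 1) (lt : T → T → Prop) (h : IsTreeOrder lt),
        IsKappaTree h κ → ∃ b : Set T, IsTreeBranch h κ b)
    (S : Set (Ordinal × (Ordinal → Bool))) (hS : IsBinaryKappaTree κ S) :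
    ∃ F : Ordinal → Bool, IsBinaryBranch κ S F := by
  obtain ⟨b, hb⟩ := H ↥S (binLt S) (binLt_isTreeOrder S hS) (binLt_isKappaTree hκ S hS)
  have hsel : ∀ α₀ : Ordinal, α₀ < κ.ord → ∃ t : ↥S, t ∈ b ∧ t.1.1 = α₀ := by
    intro α₀ hα₀
    obtain ⟨t, ⟨htb, htr⟩, -⟩ := hb.2 (Ordinal.lift.{1} α₀) (Ordinal.lift_lt.2 hα₀)
    rw [binLt_treeRank S hS] at htr
    exact ⟨t, htb, Ordinal.lift_inj.1 htr⟩
  choose tf htf using hsel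
  have huniq : ∀ (α₀ : Ordinal) (hα : α₀ < κ.ord) (t : ↥S), t ∈ b → t.1.1 = α₀ →
      t = tf α₀ hα := by
    intro α₀ hα t htb ht1
    refine (hb.2 (Ordinal.lift.{1} α₀) (Ordinal.lift_lt.2 hα)).unique
      ⟨htb, by rw [binLt_treeRank S hS, ht1]⟩
      ⟨(htf α₀ hα).1, by rw [binLt_treeRank S hS, (htf α₀ hα).2]⟩
  have hcoh : ∀ (β α₀ : Ordinal) (hβ : β < α₀) (hα : α₀ < κ.ord),
      (tf β (hβ.trans hα)).1.2 = restrictFn (tf α₀ hα).1.2 β := by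
    intro β α₀ hβ hα
    have hβ' : β < (tf α₀ hα).1.1 := by rw [(htf α₀ hα).2]; exact hβ
    have hq : ((β, restrictFn (tf α₀ hα).1.2 β) : Ordinal × (Ordinal → Bool)) ∈ S :=
      hS.2.1 (tf α₀ hα).1 (tf α₀ hα).2 β hβ'
    have hlt : binLt S ⟨_, hq⟩ (tf α₀ hα) := ⟨hβ', rfl⟩
    have hmem : (⟨_, hq⟩ : ↥S) ∈ b := hb.1 (tf α₀ hα) (htf α₀ hα).1 _ hlt
    have := huniq β (hβ.trans hα) ⟨_, hq⟩ hmem rfl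
    rw [← this]
  refine ⟨fun γ => if h : γ + 1 < κ.ord then (tf (γ + 1) h).1.2 γ else false, ?_⟩
  intro α hα
  have key : restrictFn (fun γ => if h : γ + 1 < κ.ord then (tf (γ + 1) h).1.2 γ else false) α
      = (tf α hα).1.2 := by
    funext γ
    by_cases hγ : γ < α
    · rw [restrictFn_lt hγ]
      have hsle : γ + 1 ≤ α := by
        rw [Ordinal.add_one_eq_succ]; exact Order.succ_le_of_lt hγ
      have hs : γ + 1 < κ.ord := lt_of_le_of_lt hsle hα
      rw [dif_pos hs]
      rcases eq_or_lt_of_le hsle with heq | hlt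
      · subst heq; rfl
      · rw [hcoh (γ + 1) α hlt hα, restrictFn_lt]
        rw [Ordinal.add_one_eq_succ]; exact Order.lt_succ γ
    · rw [restrictFn_le (not_lt.1 hγ)]
      exact ((hS.1 (tf α hα).1 (tf α hα).2).2 γ
        (by rw [(htf α hα).2]; exact not_lt.1 hγ)).symm
  rw [key]
  have : ((α, (tf α hα).1.2) : Ordinal × (Ordinal → Bool)) = (tf α hα).1 :=
    Prod.ext (htf α hα).2.symm rfl
  rw [this]
  exact (tf α hα).2

section TreeLemmas

universe u
variable {T : Type u} {lt : T → T → Prop}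

/-- iso between predecessors of `s` and predecessors of `s` inside predecessors of `t` -/
def segSegIso (h : IsTreeOrder lt) {s t : T} (hst : lt s t) :
    segRel lt s ≃r Subrel (segRel lt t) {b | segRel lt t b ⟨s, hst⟩} where
  toFun y := ⟨⟨y.1, h.trans y.2 hst⟩, y.2⟩
  invFun z := ⟨z.1.1, z.2⟩
  left_inv := fun y => rfl
  right_inv := fun z => rfl
  map_rel_iff' := Iff.rfl

theorem treeRank_eq_typein (h : IsTreeOrder lt) {s t : T} (hst : lt s t) :
    treeRank h s = @Ordinal.typein _ (segRel lt t) (h.wo t) ⟨s, hst⟩ := by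
  haveI := h.wo t
  haveI := h.wo s
  rw [← Ordinal.type_subrel]
  exact RelIso.ordinal_type_eq (segSegIso h hst)

theorem treeRank_lt (h : IsTreeOrder lt) {s t : T} (hst : lt s t) :
    treeRank h s < treeRank h t := by
  haveI := h.wo t
  rw [treeRank_eq_typein h hst]
  exact Ordinal.typein_lt_type _ _

theorem treeRank_surj (h : IsTreeOrder lt) (t : T) {ρ : Ordinal}
    (hρ : ρ < treeRank h t) : ∃ s, ∃ hst : lt s t, treeRank h s = ρ := by
  haveI := h.wo t
  obtain ⟨a, ha⟩ := Ordinal.typein_surj (segRel lt t) hρ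
  exact ⟨a.1, a.2, by rw [treeRank_eq_typein h a.2]; exact ha⟩

end TreeLemmas

theorem isRegular_lift {κ : Cardinal.{0}} (h : κ.IsRegular) :
    (Cardinal.lift.{1} κ).IsRegular := by
  constructor
  · rw [← Cardinal.lift_aleph0.{1,0}, Cardinal.lift_le]; exact h.1
  · rw [← Cardinal.lift_ord, ← Ordinal.lift_cof, h.cof_eq]

theorem backward_dir {κ : Cardinal.{0}} (hκ : IsStronglyInaccessible κ)
    (H : ∀ S : Set (Ordinal × (Ordinal → Bool)), IsBinaryKappaTree κ S →
        ∃ F : Ordinal → Bool, IsBinaryBranch κ S F)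
    (T : Type 1) (lt : T → T → Prop) (h : IsTreeOrder lt) (hT : IsKappaTree h κ) :
    ∃ b : Set T, IsTreeBranch h κ b := by
  obtain ⟨hℵ, hreg, hsl⟩ := hκ
  have hκ0 : ℵ₀ ≤ κ := hℵ.le
  have hκ1 : ℵ₀ ≤ Cardinal.lift.{1} κ := by
    rw [← Cardinal.lift_aleph0.{1,0}, Cardinal.lift_le]; exact hκ0
  have hlim : Order.IsSuccLimit κ.ord := Cardinal.isSuccLimit_ord hκ0
  have hsucc : ∀ {γ : Ordinal}, γ < κ.ord → γ + 1 < κ.ord := fun hγ => by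
    rw [Ordinal.add_one_eq_succ]; exact hlim.succ_lt hγ
  have hlt1 : ∀ γ : Ordinal, γ < γ + 1 := fun γ => by
    rw [Ordinal.add_one_eq_succ]; exact Order.lt_succ γ
  -- cardinality of T
  have hcard : #T ≤ Cardinal.lift.{1} κ := by
    have hcover : (Set.univ : Set T) =
        ⋃ (α : Set.Iio κ.ord), {t | treeRank h t = Ordinal.lift.{1} α.1} := by
      apply Set.eq_of_subset_of_subset
      · intro t _
        obtain ⟨α₀, hα₀, hα₀'⟩ := Ordinal.lt_lift_iff.1 (hT.1 t)
        exact Set.mem_iUnion.2 ⟨⟨α₀, hα₀⟩, hα₀'.symm⟩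
      · exact fun _ _ => trivial
    calc #T = #(Set.univ : Set T) := Cardinal.mk_univ.symm
      _ = #(⋃ (α : Set.Iio κ.ord), {t | treeRank h t = Ordinal.lift.{1} α.1}) := by
          rw [hcover]
      _ ≤ #(Set.Iio κ.ord) * ⨆ (α : Set.Iio κ.ord),
            #{t | treeRank h t = Ordinal.lift.{1} α.1} := Cardinal.mk_iUnion_le _
      _ ≤ Cardinal.lift.{1} κ * Cardinal.lift.{1} κ := by
          apply mul_le_mul'
          · rw [Ordinal.mk_Iio_ordinal, Cardinal.card_ord]
          · exact ciSup_le' fun α => (hT.2 _ (Ordinal.lift_lt.2 α.2)).2.le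
      _ = Cardinal.lift.{1} κ := Cardinal.mul_eq_self hκ1
  obtain ⟨e⟩ : Nonempty (T ↪ (Set.Iio κ.ord)) := by
    rw [← Cardinal.le_def]
    rwa [Ordinal.mk_Iio_ordinal, Cardinal.card_ord]
  -- the coding functions
  set bt : T → Ordinal → Bool :=
    fun t ξ => decide (∃ s, (lt s t ∨ s = t) ∧ (e s).1 = ξ) with hbt
  set S : Set (Ordinal × (Ordinal → Bool)) :=
    {p | ∃ (t : T) (α : Ordinal), α < κ.ord ∧ Ordinal.lift.{1} α ≤ treeRank h t ∧
      p = (α, restrictFn (bt t) α)} with hSdef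
  have hS : IsBinaryKappaTree κ S := by
    refine ⟨?_, ?_, ?_⟩
    · rintro p ⟨t, α, hα, hrank, rfl⟩
      refine ⟨hα, fun γ hγ => ?_⟩
      show restrictFn (bt t) α γ = false
      exact restrictFn_le hγ
    · rintro p ⟨t, α, hα, hrank, rfl⟩ β hβ
      refine ⟨t, β, lt_trans hβ hα, le_trans (Ordinal.lift_le.2 (le_of_lt hβ)) hrank, ?_⟩
      show (β, restrictFn (restrictFn (bt t) α) β) = (β, restrictFn (bt t) β)
      rw [restrictFn_restrictFn _ (le_of_lt hβ)]
    · intro α hα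
      obtain ⟨t, ht⟩ := (hT.2 (Ordinal.lift.{1} α) (Ordinal.lift_lt.2 hα)).1
      exact ⟨(α, restrictFn (bt t) α), ⟨t, α, hα, ht.ge, rfl⟩, rfl⟩
  obtain ⟨F, hF⟩ := H S hS
  -- main extraction lemma
  have L1 : ∀ α, α < κ.ord → ∃ t, Ordinal.lift.{1} α ≤ treeRank h t ∧
      ∀ ξ, ξ < α → F ξ = bt t ξ := by
    intro α hα
    obtain ⟨t, α', hα', hrank, heq⟩ := hF α hα
    have h1 : α = α' := congrArg Prod.fst heq
    subst h1
    have h2 : restrictFn F α = restrictFn (bt t) α := congrArg Prod.snd heq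
    refine ⟨t, hrank, fun ξ hξ => ?_⟩
    have := congrFun h2 ξ
    rwa [restrictFn_lt hξ, restrictFn_lt hξ] at this
  have hle_of : ∀ {α : Ordinal}, ∀ {t : T}, (∀ ξ, ξ < α → F ξ = bt t ξ) →
      ∀ s : T, (e s).1 < α → (F (e s).1 = true ↔ (lt s t ∨ s = t)) := by
    intro α t hagree s hs
    rw [hagree _ hs, hbt]
    simp only [decide_eq_true_iff]
    constructor
    · rintro ⟨s', hs', hes⟩
      have hss : s' = s := e.injective (Subtype.ext hes)
      rwa [← hss]
    · intro hst; exact ⟨s, hst, rfl⟩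
  -- the branch
  set B : Set T := {s | F (e s).1 = true} with hB
  -- comparability
  have hcomp : ∀ s s', s ∈ B → s' ∈ B → lt s s' ∨ s = s' ∨ lt s' s := by
    intro s s' hs hs'
    have hα : max (e s).1 (e s').1 + 1 < κ.ord := hsucc (max_lt (e s).2 (e s').2)
    obtain ⟨t, _, hagree⟩ := L1 _ hα
    have h1 : lt s t ∨ s = t := (hle_of hagree s
      (lt_of_le_of_lt (le_max_left _ _) (hlt1 _))).1 hs
    have h2 : lt s' t ∨ s' = t := (hle_of hagree s'
      (lt_of_le_of_lt (le_max_right _ _) (hlt1 _))).1 hs'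
    rcases h1 with h1 | h1 <;> rcases h2 with h2 | h2
    · haveI := h.wo t
      rcases trichotomous (r := segRel lt t) ⟨s, h1⟩ ⟨s', h2⟩ with h3 | h3 | h3
      · exact Or.inl h3
      · exact Or.inr (Or.inl (congrArg Subtype.val h3))
      · exact Or.inr (Or.inr h3)
    · subst h2; exact Or.inl h1
    · subst h1; exact Or.inr (Or.inr h2)
    · subst h1; exact Or.inr (Or.inl h2.symm)
  -- downward closure
  have hdc : ∀ x ∈ B, ∀ y, lt y x → y ∈ B := by
    intro x hx y hyx
    have hα : max (e x).1 (e y).1 + 1 < κ.ord := hsucc (max_lt (e x).2 (e y).2)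
    obtain ⟨t, _, hagree⟩ := L1 _ hα
    have h1 : lt x t ∨ x = t := (hle_of hagree x
      (lt_of_le_of_lt (le_max_left _ _) (hlt1 _))).1 hx
    have h2 : lt y t := by
      rcases h1 with h1 | h1
      · exact h.trans hyx h1
      · rwa [h1] at hyx
    exact (hle_of hagree y (lt_of_le_of_lt (le_max_right _ _) (hlt1 _))).2 (Or.inl h2)
  -- B meets every level in exactly one point
  refine ⟨B, hdc, ?_⟩
  intro α hα
  obtain ⟨α₀, hα₀, rfl⟩ := Ordinal.lt_lift_iff.1 hα
  -- cardinality of the set of elements of rank ≤ α₀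
  set A : Set T := {s | treeRank h s ≤ Ordinal.lift.{1} α₀} with hAdef
  have hAcard : #A < Cardinal.lift.{1} κ := by
    have hsub : A ⊆ ⋃ (ρ : Set.Iio (α₀ + 1)), {t | treeRank h t = Ordinal.lift.{1} ρ.1} := by
      intro s hs
      obtain ⟨ρ, hρ, hρ'⟩ := Ordinal.le_lift_iff.1 (show treeRank h s ≤ Ordinal.lift.{1} α₀ from hs)
      refine Set.mem_iUnion.2 ⟨⟨ρ, ?_⟩, hρ'.symm⟩
      rw [Ordinal.add_one_eq_succ]; exact Order.lt_succ_of_le hρ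
    have hι : #(Set.Iio (α₀ + 1)) < Cardinal.lift.{1} κ := by
      rw [Ordinal.mk_Iio_ordinal, Cardinal.lift_lt]
      exact Cardinal.lt_ord.1 (hsucc hα₀)
    refine lt_of_le_of_lt (Cardinal.mk_le_mk_of_subset hsub) ?_
    refine lt_of_le_of_lt (Cardinal.mk_iUnion_le _) ?_
    refine Cardinal.mul_lt_of_lt hκ1 hι ?_
    refine Cardinal.iSup_lt_of_isRegular (isRegular_lift hreg) hι ?_
    intro ρ
    refine (hT.2 _ (Ordinal.lift_lt.2 ?_)).2
    exact lt_trans ρ.2 (hsucc hα₀)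
  -- a bound for the codes of elements of A
  obtain ⟨μ, hμ, hμlift⟩ := Cardinal.lt_lift_iff.1 hAcard
  have hout : Cardinal.lift.{1} #(Quotient.out μ) = Cardinal.lift.{0} #A := by
    rw [Cardinal.mk_out, Cardinal.lift_id', hμlift]
  obtain ⟨g⟩ := Cardinal.lift_mk_eq'.1 hout
  set β₁ : Ordinal := iSup (fun i : Quotient.out μ => (e (g i).1).1 + 1) with hβ₁def
  have hβ₁ : β₁ < κ.ord := by
    refine Ordinal.iSup_lt_ord ?_ fun i => hsucc (e (g i).1).2
    rw [Cardinal.mk_out, hreg.cof_eq]; exact hμ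
  have hbound : ∀ s ∈ A, (e s).1 < β₁ := by
    intro s hs
    have := Ordinal.le_iSup (fun i : Quotient.out μ => (e (g i).1).1 + 1) (g.symm ⟨s, hs⟩)
    rw [Equiv.apply_symm_apply] at this
    exact lt_of_lt_of_le (hlt1 _) this
  set β : Ordinal := max β₁ (α₀ + 1) with hβdef
  have hβ : β < κ.ord := max_lt hβ₁ (hsucc hα₀)
  obtain ⟨t, hrank, hagree⟩ := L1 β hβ
  have hrank' : Ordinal.lift.{1} α₀ < treeRank h t := by
    refine lt_of_lt_of_le (Ordinal.lift_lt.2 (hlt1 α₀)) ?_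
    exact le_trans (Ordinal.lift_le.2 (le_max_right _ _)) hrank
  obtain ⟨s, hst, hsrank⟩ := treeRank_surj h t hrank'
  have hsA : s ∈ A := le_of_eq hsrank
  have hscode : (e s).1 < β := lt_of_lt_of_le (hbound s hsA) (le_max_left _ _)
  have hsB : s ∈ B := (hle_of hagree s hscode).2 (Or.inl hst)
  refine ⟨s, ⟨hsB, hsrank⟩, ?_⟩
  rintro s' ⟨hs'B, hs'rank⟩
  rcases hcomp s' s hs'B hsB with h1 | h1 | h1
  · exact absurd (hs'rank ▸ hsrank ▸ treeRank_lt h h1) (lt_irrefl _)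
  · exact h1
  · exact absurd (hs'rank ▸ hsrank ▸ treeRank_lt h h1) (lt_irrefl _)

/-- For a strongly inaccessible `κ`, every `κ`-tree has a branch iff every
binary `κ`-tree has a branch. -/
theorem tree_property_iff_binary_tree_property (κ : Cardinal.{0})
    (hκ : IsStronglyInaccessible κ) :
    (∀ (T : Type 1) (lt : T → T → Prop) (h : IsTreeOrder lt),
        IsKappaTree h κ → ∃ b : Set T, IsTreeBranch h κ b) ↔
    (∀ S : Set (Ordinal × (Ordinal → Bool)), IsBinaryKappaTree κ S →
        ∃ F : Ordinal → Bool, IsBinaryBranch κ S F) := by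
  constructor
  · intro H S hS
    exact forward_dir hκ H S hS
  · intro H T lt h hT
    exact backward_dir hκ H T lt h hT
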